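/- arXiv:2004.05733 — 3 statements merged into one kernel-verified Lean document; each statement's English description precedes it below -/
import Mathlib

section
/- For every real x with 0 ≤ x ≤ 1 and every natural number λ ≥ 1, 1 - (1 - x)^λ ≥ 1 - 1/(λx + 1) = λx/(λx + 1). -/
theorem stmt_9 (x : ℝ) (hx0 : 0 ≤ x) (hx1 : x ≤ 1) (l : ℕ) (hl : 1 ≤ l) :
    (1 - 1 / ((l : ℝ) * x + 1) = (l : ℝ) * x / ((l : ℝ) * x + 1))
    ∧ (l : ℝ) * x / ((l : ℝ) * x + 1) ≤ 1 - (1 - x) ^ l := by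
  have h1 : (0:ℝ) < (l : ℝ) * x + 1 := by positivity
  have heq : 1 - 1 / ((l : ℝ) * x + 1) = (l : ℝ) * x / ((l : ℝ) * x + 1) := by
    field_simp
    ring
  refine ⟨heq, ?_⟩
  have h0 : (0:ℝ) ≤ 1 - x := by linarith
  have hkey : (1 - x) ^ l * ((l : ℝ) * x + 1) ≤ 1 := by
    have hb : (l : ℝ) * x + 1 ≤ (1 + x) ^ l := by
      have := one_add_mul_le_pow (a := x) (by linarith) l
      linarith
    calc (1 - x) ^ l * ((l : ℝ) * x + 1)
        ≤ (1 - x) ^ l * (1 + x) ^ l := by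
          exact mul_le_mul_of_nonneg_left hb (by positivity)
      _ = ((1 - x) * (1 + x)) ^ l := (mul_pow _ _ _).symm
      _ ≤ 1 := by
          apply pow_le_one₀ <;> nlinarith
  have : (1 - x) ^ l ≤ 1 / ((l : ℝ) * x + 1) := by
    rw [le_div_iff₀ h1]; exact hkey
  linarith [heq]
end

section
/- Main exponential upper bound: Let A be a single-trajectory search algorithm on {0,1}^n producing search points x^(0), x^(1), ..., and let x* ∈ {0,1}^n. Suppose there is 0 < c ≤ 1 such that for every t ≥ 1 and all x, z ∈ {0,1}^n with x ≠ x*, H(x,z) = 1, and H(z,x*) = H(x,x*) - 1, conditionally on any history with x^(t-1) = x we have Pr[x^(t) = z] ≥ c/n. Then T = min{t : x^(t) = x*} is stochastically dominated by n times a geometric random variable with success probability (c/e)^n; in particular E[T] ≤ n(e/c)^n. -/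
open MeasureTheory ProbabilityTheory ENNReal Finset


lemma flip1 {n : ℕ} {s xs : Fin n → Bool} {i : Fin n} (hi : s i ≠ xs i) :
    hammingDist s (Function.update s i (xs i)) = 1 := by
  unfold hammingDist
  have : ({j | s j ≠ Function.update s i (xs i) j} : Finset (Fin n)) = {i} := by
    ext j
    by_cases h : j = i <;> simp [Function.update, h, hi]
  rw [this, Finset.card_singleton]

lemma flip2 {n : ℕ} {s xs : Fin n → Bool} {i : Fin n} (hi : s i ≠ xs i) :
    hammingDist (Function.update s i (xs i)) xs + 1 = hammingDist s xs := by
  unfold hammingDist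
  have h1 : ({j | Function.update s i (xs i) j ≠ xs j} : Finset (Fin n))
      = ({j | s j ≠ xs j} : Finset (Fin n)).erase i := by
    ext j
    by_cases h : j = i <;> simp [Function.update, h]
  have h2 : i ∈ ({j | s j ≠ xs j} : Finset (Fin n)) := by simp [hi]
  rw [h1, Finset.card_erase_of_mem h2]
  have := Finset.card_pos.2 ⟨i, h2⟩
  omega

lemma key_lemma {Ω : Type*} [m0 : MeasurableSpace Ω] (μ : Measure Ω)
    {n : ℕ} (ℱ : Filtration ℕ m0)
    (x : ℕ → Ω → (Fin n → Bool)) (hadapt : ∀ t, Measurable[ℱ t] (x t))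
    (xs : Fin n → Bool) {c : ℝ} (hc0 : 0 ≤ c)
    (hacc : ∀ t : ℕ, 1 ≤ t → ∀ s z : Fin n → Bool, s ≠ xs →
      hammingDist s z = 1 → hammingDist z xs + 1 = hammingDist s xs →
      ∀ A : Set Ω, MeasurableSet[ℱ (t - 1)] A → A ⊆ {ω | x (t - 1) ω = s} →
      ENNReal.ofReal (c / n) * μ A ≤ μ (A ∩ {ω | x t ω = z})) :
    ∀ d t (A : Set Ω), MeasurableSet[ℱ t] A →
      (∀ ω ∈ A, hammingDist (x t ω) xs = d) →
      ENNReal.ofReal (Nat.factorial d * (c / n) ^ d) * μ A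
        ≤ μ (A ∩ {ω | ∃ j ≤ d, x (t + j) ω = xs}) := by
  -- measurability of value sets
  have hxmeas : ∀ t (v : Fin n → Bool), MeasurableSet[ℱ t] {ω | x t ω = v} := fun t v =>
    (hadapt t) (measurableSet_singleton v)
  have hxmeas0 : ∀ t (v : Fin n → Bool), MeasurableSet {ω | x t ω = v} := fun t v =>
    ℱ.le t _ (hxmeas t v)
  intro d
  induction d with
  | zero =>
    intro t A hA hdist
    have : A ∩ {ω | ∃ j ≤ 0, x (t + j) ω = xs} = A := by
      ext ω
      constructor
      · rintro ⟨h, _⟩; exact h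
      · intro h
        refine ⟨h, 0, le_refl 0, ?_⟩
        have := hdist ω h
        rw [Nat.add_zero]
        exact hammingDist_eq_zero.1 this
    rw [this]
    simp only [Nat.factorial_zero, pow_zero, mul_one, Nat.cast_one, ENNReal.ofReal_one, one_mul]
    exact le_refl _
  | succ d ih =>
    intro t A hA hdist
    classical
    set Hit : Set Ω := {ω | ∃ j ≤ d + 1, x (t + j) ω = xs} with hHit
    set Hit' : Set Ω := {ω | ∃ j ≤ d, x (t + 1 + j) ω = xs} with hHit'
    have hHitsub : Hit' ⊆ Hit := by
      rintro ω ⟨j, hj, hx⟩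
      exact ⟨j + 1, by omega, by rwa [show t + (j + 1) = t + 1 + j by omega]⟩
    have hHit'meas : MeasurableSet Hit' := by
      have : Hit' = ⋃ j : ℕ, ⋃ (_ : j ≤ d), {ω | x (t + 1 + j) ω = xs} := by
        ext ω; simp [hHit']
      rw [this]
      exact MeasurableSet.iUnion fun j => MeasurableSet.iUnion fun _ => hxmeas0 _ _
    set S : Finset (Fin n → Bool) := univ.filter (fun s => hammingDist s xs = d + 1) with hS
    set As : (Fin n → Bool) → Set Ω := fun s => A ∩ {ω | x t ω = s} with hAs
    have hAsmeas : ∀ s, MeasurableSet[ℱ t] (As s) := fun s => hA.inter (hxmeas t s)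
    have hAsmeas0 : ∀ s, MeasurableSet (As s) := fun s => ℱ.le t _ (hAsmeas s)
    have hAunion : A = ⋃ s ∈ S, As s := by
      ext ω
      simp only [Set.mem_iUnion, hAs, Set.mem_inter_iff, Set.mem_setOf_eq, hS, mem_filter,
        mem_univ, true_and]
      constructor
      · intro h; exact ⟨x t ω, hdist ω h, h, rfl⟩
      · rintro ⟨s, _, h, _⟩; exact h
    have hAsdisj : (S : Set (Fin n → Bool)).PairwiseDisjoint As := by
      intro s hs s' hs' hne
      simp only [Set.disjoint_left]
      rintro ω ⟨_, h1⟩ ⟨_, h2⟩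
      exact hne (h1 ▸ h2 ▸ rfl)
    -- per-state bound
    have hper : ∀ s ∈ S, ENNReal.ofReal ((d+1) * (c / n) * (Nat.factorial d * (c / n) ^ d)) * μ (As s)
        ≤ μ (As s ∩ Hit) := by
      intro s hs
      have hsd : hammingDist s xs = d + 1 := by
        simpa [hS] using hs
      have hsne : s ≠ xs := by
        intro h; rw [h, hammingDist_self] at hsd; omega
      set F : Finset (Fin n) := univ.filter (fun i => s i ≠ xs i) with hF
      have hFcard : F.card = d + 1 := by
        simpa [hF, hammingDist] using hsd
      set z : Fin n → Fin n → Bool := fun i => Function.update s i (xs i) with hz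
      set B : Fin n → Set Ω := fun i => As s ∩ {ω | x (t + 1) ω = z i} with hB
      set C : Fin n → Set Ω := fun i => B i ∩ Hit' with hC
      have hCmeas : ∀ i, MeasurableSet (C i) := fun i =>
        (((hAsmeas0 s).inter (hxmeas0 _ _))).inter hHit'meas
      have hCdisj : (F : Set (Fin n)).PairwiseDisjoint C := by
        intro i hi i' hi' hne
        simp only [Set.disjoint_left]
        rintro ω ⟨⟨_, h1⟩, _⟩ ⟨⟨_, h2⟩, _⟩
        have : z i = z i' := h1.symm.trans h2
        have hi'' : s i ≠ xs i := by simpa [hF] using hi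
        have : z i i = z i' i := congrFun this i
        rw [hz] at this
        simp only [Function.update_self] at this
        rw [Function.update_of_ne hne] at this
        exact hi'' this.symm
      have hCsub : ∀ i ∈ F, C i ⊆ As s ∩ Hit := fun i _ =>
        Set.inter_subset_inter (Set.inter_subset_left) hHitsub |>.trans
          (le_refl _)
      -- each i bound
      have hstep : ∀ i ∈ F, ENNReal.ofReal (c / n) * ENNReal.ofReal (Nat.factorial d * (c / n) ^ d) * μ (As s)
          ≤ μ (C i) := by
        intro i hi
        have hi' : s i ≠ xs i := by simpa [hF] using hi
        have h1 : ENNReal.ofReal (c / n) * μ (As s) ≤ μ (As s ∩ {ω | x (t + 1) ω = z i}) := by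
          have := hacc (t + 1) (by omega) s (z i) hsne (flip1 hi') (flip2 hi')
            (As s) (by simpa using hAsmeas s) (by intro ω hω; exact hω.2)
          simpa using this
        have hBsub : ∀ ω ∈ B i, hammingDist (x (t+1) ω) xs = d := by
          rintro ω ⟨_, hω⟩
          have := flip2 hi'
          rw [Set.mem_setOf_eq] at hω
          rw [hω]
          show hammingDist (Function.update s i (xs i)) xs = d
          omega
        have h2 := ih (t + 1) (B i) ((ℱ.mono (by omega) _ (hAsmeas s)).inter (hxmeas _ _)) hBsub
        calc ENNReal.ofReal (c / n) * ENNReal.ofReal (Nat.factorial d * (c / n) ^ d) * μ (As s)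
            = ENNReal.ofReal (Nat.factorial d * (c / n) ^ d) * (ENNReal.ofReal (c / n) * μ (As s)) := by ring
          _ ≤ ENNReal.ofReal (Nat.factorial d * (c / n) ^ d) * μ (B i) := by
              exact mul_le_mul_right h1 _
          _ ≤ μ (C i) := h2
      calc ENNReal.ofReal ((d+1) * (c / n) * (Nat.factorial d * (c / n) ^ d)) * μ (As s)
          = ∑ i ∈ F, ENNReal.ofReal (c / n) * ENNReal.ofReal (Nat.factorial d * (c / n) ^ d) * μ (As s) := by
            rw [Finset.sum_const, hFcard, nsmul_eq_mul,
              ENNReal.ofReal_mul (by positivity), ENNReal.ofReal_mul (by positivity),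
              show ((d:ℝ)+1) = ((d+1:ℕ):ℝ) by push_cast; ring, ENNReal.ofReal_natCast]
            push_cast
            ring
        _ ≤ ∑ i ∈ F, μ (C i) := Finset.sum_le_sum hstep
        _ = μ (⋃ i ∈ F, C i) := (measure_biUnion_finset hCdisj (fun i _ => hCmeas i)).symm
        _ ≤ μ (As s ∩ Hit) := measure_mono (Set.iUnion₂_subset hCsub)
    -- sum over s
    have hfact : (Nat.factorial (d+1) : ℝ) * (c / n) ^ (d+1) = (d+1) * (c / n) * (Nat.factorial d * (c / n) ^ d) := by
      rw [Nat.factorial_succ]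
      push_cast
      ring
    rw [hfact]
    calc ENNReal.ofReal ((d+1) * (c / n) * (Nat.factorial d * (c / n) ^ d)) * μ A
        = ∑ s ∈ S, ENNReal.ofReal ((d+1) * (c / n) * (Nat.factorial d * (c / n) ^ d)) * μ (As s) := by
          rw [← Finset.mul_sum, ← measure_biUnion_finset hAsdisj (fun s _ => hAsmeas0 s),
            ← hAunion]
      _ ≤ ∑ s ∈ S, μ (As s ∩ Hit) := Finset.sum_le_sum hper
      _ = μ (⋃ s ∈ S, As s ∩ Hit) := by
          refine (measure_biUnion_finset ?_ (fun s _ => (hAsmeas0 s).inter ?_)).symm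
          · intro s hs s' hs' hne
            exact (hAsdisj hs hs' hne).mono Set.inter_subset_left Set.inter_subset_left
          · have : Hit = ⋃ j : ℕ, ⋃ (_ : j ≤ d + 1), {ω | x (t + j) ω = xs} := by
              ext ω; simp [hHit]
            rw [this]
            exact MeasurableSet.iUnion fun j => MeasurableSet.iUnion fun _ => hxmeas0 _ _
      _ ≤ μ (A ∩ Hit) := by
          refine measure_mono ?_
          rw [hAunion, Set.iUnion₂_inter]


lemma real_ineq {n d : ℕ} (hn : 1 ≤ n) (hd : d ≤ n) {c : ℝ} (hc0 : 0 < c) (hc1 : c ≤ 1) :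
    (c / Real.exp 1) ^ n ≤ Nat.factorial d * (c / n) ^ d := by
  have hnp : (0:ℝ) < (n:ℝ) := by exact_mod_cast hn
  have hep : (0:ℝ) < Real.exp 1 := Real.exp_pos 1
  have hfp : (0:ℝ) < Nat.factorial d := by exact_mod_cast Nat.factorial_pos d
  have h1 : (n:ℝ) ^ d / Nat.factorial d ≤ Real.exp 1 ^ n := by
    rw [← Real.exp_nat_mul, mul_one]
    exact Real.pow_div_factorial_le_exp (x := (n:ℝ)) (by positivity) d
  have h2 : (n:ℝ) ^ d ≤ Nat.factorial d * Real.exp 1 ^ n := by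
    rw [div_le_iff₀ hfp] at h1
    linarith [h1]
  rw [div_pow, div_pow, ← mul_div_assoc, div_le_div_iff₀ (by positivity) (by positivity)]
  calc c ^ n * (n:ℝ) ^ d ≤ c ^ d * (n:ℝ) ^ d := by
        have := pow_le_pow_of_le_one hc0.le hc1 hd
        nlinarith [pow_pos hnp d]
    _ ≤ c ^ d * (Nat.factorial d * Real.exp 1 ^ n) := by
        have := pow_pos hc0 d
        nlinarith
    _ = Nat.factorial d * c ^ d * Real.exp 1 ^ n := by ring


lemma block_test {Ω : Type*} [m0 : MeasurableSpace Ω] (μ : Measure Ω)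
    {n : ℕ} (hn : 1 ≤ n) (ℱ : Filtration ℕ m0)
    (x : ℕ → Ω → (Fin n → Bool)) (hadapt : ∀ t, Measurable[ℱ t] (x t))
    (xs : Fin n → Bool) {c : ℝ} (hc0 : 0 < c) (hc1 : c ≤ 1)
    (hkey : ∀ d t (A : Set Ω), MeasurableSet[ℱ t] A →
      (∀ ω ∈ A, hammingDist (x t ω) xs = d) →
      ENNReal.ofReal (Nat.factorial d * (c / n) ^ d) * μ A
        ≤ μ (A ∩ {ω | ∃ j ≤ d, x (t + j) ω = xs}))
    (hri : ∀ d : ℕ, d ≤ n → (c / Real.exp 1) ^ n ≤ Nat.factorial d * (c / n) ^ d) :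
    ∀ t (A : Set Ω), MeasurableSet[ℱ t] A →
      ENNReal.ofReal ((c / Real.exp 1) ^ n) * μ A
        ≤ μ (A ∩ {ω | ∃ j ≤ n, x (t + j) ω = xs}) := by
  classical
  intro t A hA
  set Hit : Set Ω := {ω | ∃ j ≤ n, x (t + j) ω = xs} with hHit
  have hHitmeas : MeasurableSet Hit := by
    have : Hit = ⋃ j : ℕ, ⋃ (_ : j ≤ n), {ω | x (t + j) ω = xs} := by
      ext ω; simp [hHit]
    rw [this]
    exact MeasurableSet.iUnion fun j => MeasurableSet.iUnion fun _ =>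
      ℱ.le (t + j) _ ((hadapt (t + j)) (measurableSet_singleton xs))
  set Ad : ℕ → Set Ω := fun d => A ∩ {ω | hammingDist (x t ω) xs = d} with hAd
  have hAdmeas : ∀ d, MeasurableSet[ℱ t] (Ad d) := by
    intro d
    refine hA.inter ?_
    have : {ω | hammingDist (x t ω) xs = d} = x t ⁻¹' {v | hammingDist v xs = d} := rfl
    rw [this]
    exact hadapt t (Set.toFinite _).measurableSet
  have hAdmeas0 : ∀ d, MeasurableSet (Ad d) := fun d => ℱ.le t _ (hAdmeas d)
  have hAunion : A = ⋃ d ∈ Finset.range (n+1), Ad d := by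
    ext ω
    simp only [Set.mem_iUnion, hAd, Set.mem_inter_iff, Set.mem_setOf_eq, Finset.mem_range]
    constructor
    · intro h
      refine ⟨hammingDist (x t ω) xs, ?_, h, rfl⟩
      have := hammingDist_le_card_fintype (x := x t ω) (y := xs)
      simp only [Fintype.card_fin] at this
      omega
    · rintro ⟨d, _, h, _⟩; exact h
  have hdisj : (↑(Finset.range (n+1)) : Set ℕ).PairwiseDisjoint Ad := by
    intro d hd d' hd' hne
    simp only [Set.disjoint_left]
    rintro ω ⟨_, h1⟩ ⟨_, h2⟩
    exact hne ((h1 : _ = d).symm.trans h2)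
  have hper : ∀ d ∈ Finset.range (n+1),
      ENNReal.ofReal ((c / Real.exp 1) ^ n) * μ (Ad d) ≤ μ (Ad d ∩ Hit) := by
    intro d hd
    have hdn : d ≤ n := by simpa [Nat.lt_succ_iff] using hd
    calc ENNReal.ofReal ((c / Real.exp 1) ^ n) * μ (Ad d)
        ≤ ENNReal.ofReal (Nat.factorial d * (c / n) ^ d) * μ (Ad d) :=
          mul_le_mul_left (ENNReal.ofReal_le_ofReal (hri d hdn)) _
      _ ≤ μ (Ad d ∩ {ω | ∃ j ≤ d, x (t + j) ω = xs}) :=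
          hkey d t (Ad d) (hAdmeas d) (fun ω hω => hω.2)
      _ ≤ μ (Ad d ∩ Hit) := by
          refine measure_mono (Set.inter_subset_inter le_rfl ?_)
          rintro ω ⟨j, hj, hx⟩
          exact ⟨j, hj.trans hdn, hx⟩
  calc ENNReal.ofReal ((c / Real.exp 1) ^ n) * μ A
      = ∑ d ∈ Finset.range (n+1), ENNReal.ofReal ((c / Real.exp 1) ^ n) * μ (Ad d) := by
        rw [← Finset.mul_sum, ← measure_biUnion_finset hdisj (fun d _ => hAdmeas0 d), ← hAunion]
    _ ≤ ∑ d ∈ Finset.range (n+1), μ (Ad d ∩ Hit) := Finset.sum_le_sum hper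
    _ = μ (⋃ d ∈ Finset.range (n+1), Ad d ∩ Hit) := by
        refine (measure_biUnion_finset ?_ (fun d _ => (hAdmeas0 d).inter hHitmeas)).symm
        intro d hd d' hd' hne
        exact (hdisj hd hd' hne).mono Set.inter_subset_left Set.inter_subset_left
    _ ≤ μ (A ∩ Hit) := by
        refine measure_mono ?_
        rw [hAunion, Set.iUnion₂_inter]



theorem stmt_15 {Ω : Type*} [m0 : MeasurableSpace Ω] (μ : Measure Ω) [IsProbabilityMeasure μ]
    (n : ℕ) (hn : 1 ≤ n) (ℱ : Filtration ℕ m0)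
    (x : ℕ → Ω → (Fin n → Bool)) (hadapt : ∀ t, Measurable[ℱ t] (x t))
    (xs : Fin n → Bool) (c : ℝ) (hc0 : 0 < c) (hc1 : c ≤ 1)
    (hacc : ∀ t : ℕ, 1 ≤ t → ∀ s z : Fin n → Bool, s ≠ xs →
      hammingDist s z = 1 → hammingDist z xs + 1 = hammingDist s xs →
      ∀ A : Set Ω, MeasurableSet[ℱ (t - 1)] A → A ⊆ {ω | x (t - 1) ω = s} →
      ENNReal.ofReal (c / n) * μ A ≤ μ (A ∩ {ω | x t ω = z})) :
    (∀ k : ℕ, μ {ω | ∀ t ≤ n * k, x t ω ≠ xs}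
        ≤ ENNReal.ofReal ((1 - (c / Real.exp 1) ^ n) ^ k))
    ∧ ∫⁻ ω, (⨅ (t : ℕ) (_ : x t ω = xs), (t : ℝ≥0∞)) ∂μ
        ≤ ENNReal.ofReal (n * (Real.exp 1 / c) ^ n) := by
  classical
  have hblock : ∀ t (A : Set Ω), MeasurableSet[ℱ t] A →
      ENNReal.ofReal ((c / Real.exp 1) ^ n) * μ A
        ≤ μ (A ∩ {ω | ∃ j ≤ n, x (t + j) ω = xs}) :=
    block_test μ hn ℱ x hadapt xs hc0 hc1
      (key_lemma μ ℱ x hadapt xs hc0.le hacc)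
      (fun d hd => real_ineq hn hd hc0 hc1)
  set p : ℝ := (c / Real.exp 1) ^ n with hp
  have hep : (0:ℝ) < Real.exp 1 := Real.exp_pos 1
  have hp0 : 0 < p := pow_pos (div_pos hc0 hep) n
  have hp1 : p ≤ 1 := by
    apply pow_le_one₀ (div_pos hc0 hep).le
    rw [div_le_one hep]
    have := Real.add_one_le_exp (1:ℝ)
    linarith
  set E : ℕ → Set Ω := fun k => {ω | ∀ t ≤ n * k, x t ω ≠ xs} with hE
  have hEmeas : ∀ k, MeasurableSet[ℱ (n*k)] (E k) := by
    intro k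
    have : E k = ⋂ t ∈ {t : ℕ | t ≤ n*k}, {ω | x t ω = xs}ᶜ := by
      ext ω; simp [hE]
    rw [this]
    refine MeasurableSet.biInter (Set.to_countable _) fun t ht => ?_
    exact ℱ.mono ht _ ((hadapt t (measurableSet_singleton xs)).compl)
  have hEmeas0 : ∀ k, MeasurableSet (E k) := fun k => ℱ.le _ _ (hEmeas k)
  have part1 : ∀ k, μ (E k) ≤ ENNReal.ofReal ((1 - p) ^ k) := by
    intro k
    induction k with
    | zero =>
      simp only [pow_zero, ENNReal.ofReal_one]
      exact prob_le_one
    | succ k ihk =>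
      set H : Set Ω := {ω | ∃ j ≤ n, x (n * k + j) ω = xs} with hH
      have hHmeas : MeasurableSet H := by
        have : H = ⋃ j : ℕ, ⋃ (_ : j ≤ n), {ω | x (n * k + j) ω = xs} := by
          ext ω; simp [hH]
        rw [this]
        exact MeasurableSet.iUnion fun j => MeasurableSet.iUnion fun _ =>
          ℱ.le _ _ ((hadapt _) (measurableSet_singleton xs))
      have hbl := hblock (n * k) (E k) (hEmeas k)
      have hsub : E (k+1) ⊆ E k := by
        intro ω h t ht
        exact h t (ht.trans (Nat.mul_le_mul_left n (Nat.le_succ k)))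
      have hdisj : Disjoint (E (k+1)) (E k ∩ H) := by
        rw [Set.disjoint_left]
        rintro ω h ⟨_, j, hj, hx⟩
        refine h (n * k + j) ?_ hx
        rw [Nat.mul_succ]
        omega
      have hunion_le : μ (E (k+1)) + μ (E k ∩ H) ≤ μ (E k) := by
        rw [← measure_union hdisj ((hEmeas0 k).inter hHmeas)]
        exact measure_mono (Set.union_subset hsub Set.inter_subset_left)
      have h3 : μ (E (k+1)) + ENNReal.ofReal p * μ (E k) ≤ μ (E k) :=
        le_trans (add_le_add le_rfl hbl) hunion_le
      have h4 : μ (E (k+1)) ≤ μ (E k) - ENNReal.ofReal p * μ (E k) :=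
        ENNReal.le_sub_of_add_le_right (ENNReal.mul_ne_top ENNReal.ofReal_ne_top (measure_ne_top μ _)) h3
      have hople : ENNReal.ofReal p ≤ 1 := by
        simpa using ENNReal.ofReal_le_ofReal hp1
      have h5 : μ (E k) - ENNReal.ofReal p * μ (E k) ≤ (1 - ENNReal.ofReal p) * μ (E k) := by
        rw [tsub_le_iff_right, ← add_mul, tsub_add_cancel_of_le hople, one_mul]
      have h6 : (1 : ℝ≥0∞) - ENNReal.ofReal p = ENNReal.ofReal (1 - p) := by
        rw [ENNReal.ofReal_sub _ hp0.le, ENNReal.ofReal_one]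
      calc μ (E (k+1)) ≤ (1 - ENNReal.ofReal p) * μ (E k) := h4.trans h5
        _ = ENNReal.ofReal (1 - p) * μ (E k) := by rw [h6]
        _ ≤ ENNReal.ofReal (1 - p) * ENNReal.ofReal ((1 - p) ^ k) := mul_le_mul_right ihk _
        _ = ENNReal.ofReal ((1 - p) ^ (k + 1)) := by
            rw [← ENNReal.ofReal_mul (by linarith), pow_succ, mul_comm]
  refine ⟨part1, ?_⟩
  set T : Ω → ℝ≥0∞ := fun ω => ⨅ (t : ℕ) (_ : x t ω = xs), (t : ℝ≥0∞) with hT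
  have hpt : ∀ ω, T ω ≤ ∑' k, Set.indicator (E k) (fun _ => (n : ℝ≥0∞)) ω := by
    intro ω
    by_cases hall : ∀ k, ω ∈ E k
    · have htop : ∑' k, Set.indicator (E k) (fun _ => (n : ℝ≥0∞)) ω = ⊤ := by
        have h1 : ∀ k : ℕ, Set.indicator (E k) (fun _ => (n : ℝ≥0∞)) ω = (n : ℝ≥0∞) :=
          fun k => Set.indicator_of_mem (hall k) _
        rw [tsum_congr h1]
        exact ENNReal.tsum_const_eq_top_of_ne_zero (Nat.cast_ne_zero.mpr (by omega))
      rw [htop]; exact le_top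
    · push_neg at hall
      obtain ⟨k0, hk0⟩ := hall
      have hex : ∃ t, x t ω = xs := by
        simp only [hE, Set.mem_setOf_eq, not_forall] at hk0
        obtain ⟨t, _, h⟩ := hk0
        exact ⟨t, not_not.1 h⟩
      set m := Nat.find hex with hm
      have hmx : x m ω = xs := Nat.find_spec hex
      have hTm : T ω ≤ (m : ℝ≥0∞) := iInf_le_of_le m (iInf_le_of_le hmx le_rfl)
      rcases Nat.eq_zero_or_pos m with hm0 | hmpos
      · rw [hm0] at hTm
        exact hTm.trans (le_of_eq_of_le (by norm_num) zero_le)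
      · set K := (m - 1) / n + 1 with hK
        have hcount : ∀ k ∈ Finset.range K,
            Set.indicator (E k) (fun _ => (n : ℝ≥0∞)) ω = (n : ℝ≥0∞) := by
          intro k hk
          refine Set.indicator_of_mem ?_ _
          intro t ht
          have hkK : k < K := Finset.mem_range.1 hk
          have h1 : n * k ≤ m - 1 := by
            have hkq : k ≤ (m - 1) / n := by omega
            calc n * k ≤ n * ((m - 1) / n) := Nat.mul_le_mul_left n hkq
              _ ≤ m - 1 := by
                  rw [mul_comm]
                  exact Nat.div_mul_le_self _ _
          have htm : t < m := by omega
          exact Nat.find_min hex htm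
        have hmK : m ≤ n * K := by
          have h2 : m - 1 < n * K := by
            have hmod := Nat.div_add_mod (m - 1) n
            have hlt : (m - 1) % n < n := Nat.mod_lt _ (by omega)
            calc m - 1 = n * ((m - 1) / n) + (m - 1) % n := hmod.symm
              _ < n * ((m - 1) / n) + n := by omega
              _ = n * K := by rw [hK, Nat.mul_succ]
          exact Nat.le_of_pred_lt h2
        calc T ω ≤ (m : ℝ≥0∞) := hTm
          _ ≤ ((n * K : ℕ) : ℝ≥0∞) := by exact_mod_cast hmK
          _ = ∑ k ∈ Finset.range K, (n : ℝ≥0∞) := by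
              rw [Finset.sum_const, Finset.card_range, nsmul_eq_mul]
              push_cast
              ring
          _ = ∑ k ∈ Finset.range K, Set.indicator (E k) (fun _ => (n : ℝ≥0∞)) ω :=
              (Finset.sum_congr rfl hcount).symm
          _ ≤ ∑' k, Set.indicator (E k) (fun _ => (n : ℝ≥0∞)) ω := ENNReal.sum_le_tsum _
  have hgeom : ∑' k : ℕ, ENNReal.ofReal ((1 - p) ^ k) = (ENNReal.ofReal p)⁻¹ := by
    have h1 : ∀ k : ℕ, ENNReal.ofReal ((1 - p) ^ k) = (ENNReal.ofReal (1 - p)) ^ k :=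
      fun k => ENNReal.ofReal_pow (by linarith) k
    have h2 : (1:ℝ≥0∞) - ENNReal.ofReal (1 - p) = ENNReal.ofReal p := by
      rw [← ENNReal.ofReal_one, ← ENNReal.ofReal_sub _ (by linarith : (0:ℝ) ≤ 1 - p)]
      congr 1
      ring
    rw [tsum_congr h1, ENNReal.tsum_geometric, h2]
  calc ∫⁻ ω, T ω ∂μ ≤ ∫⁻ ω, ∑' k, Set.indicator (E k) (fun _ => (n : ℝ≥0∞)) ω ∂μ :=
        lintegral_mono hpt
    _ = ∑' k, ∫⁻ ω, Set.indicator (E k) (fun _ => (n : ℝ≥0∞)) ω ∂μ :=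
        lintegral_tsum fun k => (measurable_const.indicator (hEmeas0 k)).aemeasurable
    _ = ∑' k, (n : ℝ≥0∞) * μ (E k) := by
        refine tsum_congr fun k => ?_
        rw [lintegral_indicator_const (hEmeas0 k)]
    _ ≤ ∑' k, (n : ℝ≥0∞) * ENNReal.ofReal ((1 - p) ^ k) :=
        ENNReal.tsum_le_tsum fun k => mul_le_mul_right (part1 k) _
    _ = (n : ℝ≥0∞) * (ENNReal.ofReal p)⁻¹ := by
        rw [ENNReal.tsum_mul_left, hgeom]
    _ = ENNReal.ofReal (n * (Real.exp 1 / c) ^ n) := by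
        rw [← ENNReal.ofReal_inv_of_pos hp0, ← ENNReal.ofReal_natCast n,
          ← ENNReal.ofReal_mul (Nat.cast_nonneg n)]
        congr 1
        rw [hp, ← inv_pow, inv_div]
end

section
/- Let q ∈ [0,1) and n ≥ 1, and let x, y ∈ {0,1}^n differ in exactly one position i with x_i = 0, y_i = 1. Let m^x, m^y ∈ {0,1}^n be independent random vectors whose bits are independently 1 with probability q each. Then Pr[OneMax(x ⊕ m^x) < OneMax(y ⊕ m^y)] ≥ (1-q)²/2. -/
open MeasureTheory ProbabilityTheory Finset
open scoped ENNReal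

def oneMax {n : ℕ} (x : Fin n → Bool) : ℕ :=
  (Finset.univ.filter fun i => x i = true).card

theorem stmt_17 {Ω : Type*} [MeasurableSpace Ω] (μ : Measure Ω) [IsProbabilityMeasure μ]
    (n : ℕ) (q : ℝ) (hq0 : 0 ≤ q) (hq1 : q < 1)
    (x y : Fin n → Bool) (i : Fin n)
    (hxi : x i = false) (hyi : y i = true) (hxy : ∀ j, j ≠ i → x j = y j)
    (mx my : Ω → Fin n → Bool)
    (hmx : ∀ j, Measurable fun ω => mx ω j) (hmy : ∀ j, Measurable fun ω => my ω j)
    (hind : iIndepFun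
      (fun j ω => Sum.elim (mx ω) (my ω) j) μ)
    (hpx : ∀ j, μ {ω | mx ω j = true} = ENNReal.ofReal q)
    (hpy : ∀ j, μ {ω | my ω j = true} = ENNReal.ofReal q) :
    ENNReal.ofReal ((1 - q) ^ 2 / 2) ≤
      μ {ω | oneMax (fun j => xor (x j) (mx ω j)) <
             oneMax (fun j => xor (y j) (my ω j))} := by
  classical
  set b : Bool → ℝ≥0∞ := fun c => if c then ENNReal.ofReal q else 1 - ENNReal.ofReal q with hb
  have hql : ENNReal.ofReal q ≤ 1 := by
    rw [← ENNReal.ofReal_one]; exact ENNReal.ofReal_le_ofReal hq1.le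
  -- single coordinate probabilities
  have hbx : ∀ j (c : Bool), μ {ω | mx ω j = c} = b c := by
    intro j c
    cases c with
    | true => simpa [hb] using hpx j
    | false =>
      have hs : {ω | mx ω j = false} = {ω | mx ω j = true}ᶜ := by
        ext ω; simp
      have hm : MeasurableSet {ω | mx ω j = true} := (hmx j) (measurableSet_singleton true)
      rw [hs, measure_compl hm (measure_ne_top μ _), measure_univ, hpx j]
      simp [hb]
  have hby : ∀ j (c : Bool), μ {ω | my ω j = c} = b c := by
    intro j c
    cases c with
    | true => simpa [hb] using hpy j
    | false =>
      have hs : {ω | my ω j = false} = {ω | my ω j = true}ᶜ := by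
        ext ω; simp
      have hm : MeasurableSet {ω | my ω j = true} := (hmy j) (measurableSet_singleton true)
      rw [hs, measure_compl hm (measure_ne_top μ _), measure_univ, hpy j]
      simp [hb]
  set P : (Fin n → Bool) → ℝ≥0∞ := fun v => ∏ j, b (v j) with hP
  set G : (Fin n → Bool) → ℕ :=
    fun v => ((univ.erase i).filter fun j => xor (x j) (v j) = true).card with hG
  -- atoms
  have hset : ∀ v w : Fin n → Bool, {ω | mx ω = v ∧ my ω = w}
      = ⋂ k : Fin n ⊕ Fin n, (fun ω => Sum.elim (mx ω) (my ω) k) ⁻¹' {Sum.elim v w k} := by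
    intro v w
    ext ω
    simp only [Set.mem_setOf_eq, Set.mem_iInter, Set.mem_preimage, Set.mem_singleton_iff]
    constructor
    · rintro ⟨h1, h2⟩ k; cases k <;> simp [h1, h2]
    · intro h
      constructor
      · funext j; exact h (Sum.inl j)
      · funext j; exact h (Sum.inr j)
  have hmk : ∀ k : Fin n ⊕ Fin n, Measurable (fun ω => Sum.elim (mx ω) (my ω) k) := by
    rintro (j | j)
    · exact hmx j
    · exact hmy j
  have hCm : ∀ v w : Fin n → Bool, MeasurableSet {ω | mx ω = v ∧ my ω = w} := by
    intro v w
    rw [hset v w]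
    exact MeasurableSet.iInter fun k => (hmk k) (measurableSet_singleton _)
  have hC : ∀ v w : Fin n → Bool, μ {ω | mx ω = v ∧ my ω = w} = P v * P w := by
    intro v w
    rw [hset v w]
    have h1 := (iIndepFun_iff_measure_inter_preimage_eq_mul.1 hind) Finset.univ
      (sets := fun k => {Sum.elim v w k}) (fun k _ => measurableSet_singleton _)
    rw [← Set.biInter_univ (fun k => (fun ω => Sum.elim (mx ω) (my ω) k) ⁻¹' {Sum.elim v w k})]
    rw [show (⋂ k ∈ (Set.univ : Set (Fin n ⊕ Fin n)),
        (fun ω => Sum.elim (mx ω) (my ω) k) ⁻¹' {Sum.elim v w k})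
      = ⋂ k ∈ (Finset.univ : Finset (Fin n ⊕ Fin n)),
        (fun ω => Sum.elim (mx ω) (my ω) k) ⁻¹' {Sum.elim v w k} by simp]
    rw [h1, Fintype.prod_sum_type]
    congr 1
    · refine Finset.prod_congr rfl fun j _ => ?_
      have : ((fun ω => Sum.elim (mx ω) (my ω) (Sum.inl j)) ⁻¹' {Sum.elim v w (Sum.inl j)})
          = {ω | mx ω j = v j} := by ext ω; simp
      rw [this, hbx]
    · refine Finset.prod_congr rfl fun j _ => ?_
      have : ((fun ω => Sum.elim (mx ω) (my ω) (Sum.inr j)) ⁻¹' {Sum.elim v w (Sum.inr j)})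
          = {ω | my ω j = w j} := by ext ω; simp
      rw [this, hby]
  -- counting lemma
  have hsplit : ∀ p : Fin n → Bool, (univ.filter fun j => p j = true).card
      = ((univ.erase i).filter fun j => p j = true).card + (if p i = true then 1 else 0) := by
    intro p
    have hfe := Finset.filter_erase (p := fun j => p j = true) i (univ : Finset (Fin n))
    rw [hfe]
    by_cases h : p i = true
    · rw [if_pos h, Finset.card_erase_of_mem (Finset.mem_filter.2 ⟨mem_univ i, h⟩)]
      have hpos : 0 < (univ.filter fun j => p j = true).card :=
        Finset.card_pos.2 ⟨i, Finset.mem_filter.2 ⟨mem_univ i, h⟩⟩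
      omega
    · rw [if_neg h, add_zero,
        Finset.erase_eq_of_notMem (a := i) (s := univ.filter fun j => p j = true)
          (fun hmem => h (Finset.mem_filter.1 hmem).2)]
  -- the good set of pairs
  set T : Finset ((Fin n → Bool) × (Fin n → Bool)) :=
    univ.filter (fun p => p.1 i = false ∧ p.2 i = false ∧ G p.1 ≤ G p.2) with hT
  have hsub : ∀ p ∈ T, {ω | mx ω = p.1 ∧ my ω = p.2} ⊆
      {ω | oneMax (fun j => xor (x j) (mx ω j)) < oneMax (fun j => xor (y j) (my ω j))} := by
    rintro ⟨v, w⟩ hp ω ⟨h1, h2⟩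
    simp only [hT, Finset.mem_filter] at hp
    obtain ⟨-, hv, hw, hGle⟩ := hp
    simp only [Set.mem_setOf_eq, h1, h2, oneMax]
    rw [hsplit (fun j => xor (x j) (v j)), hsplit (fun j => xor (y j) (w j))]
    have e1 : xor (x i) (v i) = false := by rw [hxi, hv]; rfl
    have e2 : xor (y i) (w i) = true := by rw [hyi, hw]; rfl
    rw [e1, e2]
    have e3 : ((univ.erase i).filter fun j => xor (y j) (w j) = true)
        = ((univ.erase i).filter fun j => xor (x j) (w j) = true) := by
      apply Finset.filter_congr
      intro j hj
      rw [hxy j (Finset.mem_erase.1 hj).1]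
    simp only [e3]
    have : G v ≤ G w := hGle
    simp only [hG] at this
    simp only [Bool.false_eq_true, if_false, if_true, add_zero]
    omega
  -- disjointness of atoms
  have hdisj : (↑T : Set ((Fin n → Bool) × (Fin n → Bool))).PairwiseDisjoint
      (fun p => {ω | mx ω = p.1 ∧ my ω = p.2}) := by
    intro p _ p' _ hne
    rw [Function.onFun, Set.disjoint_left]
    rintro ω ⟨h1, h2⟩ ⟨h1', h2'⟩
    exact hne (Prod.ext (h1 ▸ h1') (h2 ▸ h2'))
  -- lower bound by sum over T
  have hge : ∑ p ∈ T, P p.1 * P p.2 ≤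
      μ {ω | oneMax (fun j => xor (x j) (mx ω j)) < oneMax (fun j => xor (y j) (my ω j))} := by
    calc ∑ p ∈ T, P p.1 * P p.2
        = ∑ p ∈ T, μ {ω | mx ω = p.1 ∧ my ω = p.2} := by
          refine Finset.sum_congr rfl fun p _ => (hC p.1 p.2).symm
      _ = μ (⋃ p ∈ T, {ω | mx ω = p.1 ∧ my ω = p.2}) :=
          (measure_biUnion_finset hdisj (fun p _ => hCm p.1 p.2)).symm
      _ ≤ _ := measure_mono (Set.iUnion₂_subset hsub)
  -- sum over v with v i = false
  set A : Finset (Fin n → Bool) := univ.filter (fun v => v i = false) with hA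
  have hsumA : ∑ v ∈ A, P v = 1 - ENNReal.ofReal q := by
    set g : Fin n → Bool → ℝ≥0∞ := fun j c => if j = i ∧ c = true then 0 else b c with hg
    have step1 : ∑ v ∈ A, P v = ∑ v : Fin n → Bool, ∏ j, g j (v j) := by
      rw [hA, Finset.sum_filter]
      refine Finset.sum_congr rfl fun v _ => ?_
      by_cases h : v i = false
      · rw [if_pos h]
        refine Finset.prod_congr rfl fun j _ => ?_
        by_cases hj : j = i
        · subst hj; simp [hg, h]
        · simp [hg, hj]
      · rw [if_neg h]
        have hv : v i = true := by
          cases hvi : v i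
          · exact absurd hvi h
          · rfl
        symm
        apply Finset.prod_eq_zero (Finset.mem_univ i)
        simp [hg, hv]
    rw [step1, ← Fintype.piFinset_univ, ← Finset.prod_univ_sum]
    have step2 : ∀ j, (∑ c ∈ (univ : Finset Bool), g j c)
        = if j = i then 1 - ENNReal.ofReal q else 1 := by
      intro j
      rw [Fintype.sum_bool]
      by_cases hj : j = i
      · subst hj; simp [hg, hb]
      · simp only [hg, hj, false_and, if_false, hb]
        simp only [if_true, if_false]
        exact add_tsub_cancel_of_le hql
    calc ∏ j, ∑ c ∈ (univ : Finset Bool), g j c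
        = ∏ j, (if j = i then 1 - ENNReal.ofReal q else 1) :=
          Finset.prod_congr rfl fun j _ => step2 j
      _ = 1 - ENNReal.ofReal q := by simp
  -- symmetry
  set T2 : Finset ((Fin n → Bool) × (Fin n → Bool)) :=
    univ.filter (fun p => p.1 i = false ∧ p.2 i = false ∧ G p.2 ≤ G p.1) with hT2
  have hswap : ∑ p ∈ T2, P p.1 * P p.2 = ∑ p ∈ T, P p.1 * P p.2 := by
    refine Finset.sum_equiv (Equiv.prodComm _ _) ?_ ?_
    · intro p
      simp only [hT, hT2, Finset.mem_filter, Finset.mem_univ, true_and, Equiv.prodComm_apply,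
        Prod.fst_swap, Prod.snd_swap]
      tauto
    · intro p _
      simp only [Equiv.prodComm_apply, Prod.fst_swap, Prod.snd_swap]
      exact mul_comm _ _
  have hcover : univ.filter (fun p : (Fin n → Bool) × (Fin n → Bool) =>
      p.1 i = false ∧ p.2 i = false) ⊆ T ∪ T2 := by
    intro p hp
    simp only [hT, hT2, Finset.mem_filter, Finset.mem_union, Finset.mem_univ, true_and] at *
    rcases le_total (G p.1) (G p.2) with h | h
    · exact Or.inl ⟨hp.1, hp.2, h⟩
    · exact Or.inr ⟨hp.1, hp.2, h⟩
  have hWeq : ∑ p ∈ univ.filter (fun p : (Fin n → Bool) × (Fin n → Bool) =>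
      p.1 i = false ∧ p.2 i = false), P p.1 * P p.2 = (1 - ENNReal.ofReal q) ^ 2 := by
    rw [Finset.sum_filter, Fintype.sum_prod_type]
    have hrow : ∀ v : Fin n → Bool,
        (∑ w : Fin n → Bool, if v i = false ∧ w i = false then P v * P w else 0)
        = (if v i = false then P v else 0) * ∑ w ∈ A, P w := by
      intro v
      rw [hA, Finset.sum_filter, Finset.mul_sum]
      refine Finset.sum_congr rfl fun w _ => ?_
      by_cases h1 : v i = false <;> by_cases h2 : w i = false <;> simp [h1, h2]
    simp_rw [hrow]
    rw [← Finset.sum_mul, ← Finset.sum_filter, ← hA, hsumA, sq]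
  have hWle : (1 - ENNReal.ofReal q) ^ 2 ≤ ∑ p ∈ T, P p.1 * P p.2 + ∑ p ∈ T, P p.1 * P p.2 := by
    rw [← hWeq]
    calc ∑ p ∈ univ.filter (fun p : (Fin n → Bool) × (Fin n → Bool) =>
          p.1 i = false ∧ p.2 i = false), P p.1 * P p.2
        ≤ ∑ p ∈ T ∪ T2, P p.1 * P p.2 := Finset.sum_le_sum_of_subset hcover
      _ ≤ ∑ p ∈ T, P p.1 * P p.2 + ∑ p ∈ T2, P p.1 * P p.2 := by
          rw [← Finset.sum_union_inter]
          exact le_self_add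
      _ = ∑ p ∈ T, P p.1 * P p.2 + ∑ p ∈ T, P p.1 * P p.2 := by rw [hswap]
  -- conclude
  have hofReal : ENNReal.ofReal ((1 - q) ^ 2 / 2) = (1 - ENNReal.ofReal q) ^ 2 / 2 := by
    rw [ENNReal.ofReal_div_of_pos (by norm_num), ENNReal.ofReal_pow (by linarith),
      ENNReal.ofReal_sub 1 hq0, ENNReal.ofReal_one]
    norm_num
  rw [hofReal]
  refine le_trans ?_ hge
  rw [ENNReal.div_le_iff (by norm_num) (by norm_num)]
  calc (1 - ENNReal.ofReal q) ^ 2 ≤ ∑ p ∈ T, P p.1 * P p.2 + ∑ p ∈ T, P p.1 * P p.2 := hWle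
    _ = (∑ p ∈ T, P p.1 * P p.2) * 2 := by ring
end
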